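/- Let n be a positive integer and t >= 0 with n >= 2t+1. Then every colouring f of H_n with t_f = t satisfies winst(f) >= floor(t/(n-2t)) + ceil(t/(n-2t)) + 1; that is, winst(n,t) >= floor(t/(n-2t)) + ceil(t/(n-2t)) + 1. -/

import Mathlib

open Finset

/-- The number of entries of a point of the hypercube equal to `1` (`true`). -/
def onesCount {n : ℕ} (x : Fin n → Bool) : ℕ :=
  (univ.filter fun i => x i = true).card

/-- The number of entries of a point of the hypercube equal to `0` (`false`). -/
def zerosCount {n : ℕ} (x : Fin n → Bool) : ℕ :=
  (univ.filter fun i => x i = false).card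

/-- `P` is a geodesic in the `n`-hypercube: consecutive points differ in exactly one
entry, and each of the `n` entries changes at exactly one step. -/
def IsGeodesic {n : ℕ} (P : Fin (n+1) → Fin n → Bool) : Prop :=
  ∃ σ : Equiv.Perm (Fin n), ∀ j : Fin n, ∀ ℓ : Fin n,
    P j.succ ℓ = if σ ℓ = j then !(P j.castSucc ℓ) else P j.castSucc ℓ

/-- The number of jumps of the geodesic `P` in the colouring `f`. -/
def jumps {n : ℕ} (f : (Fin n → Bool) → Bool) (P : Fin (n+1) → Fin n → Bool) : ℕ :=
  (univ.filter fun j : Fin n => f (P j.succ) ≠ f (P j.castSucc)).card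

/-- `inst f` is the maximum of `jumps f P` over all geodesics `P`. -/
noncomputable def inst {n : ℕ} (f : (Fin n → Bool) → Bool) : ℕ :=
  sSup {m | ∃ P : Fin (n+1) → Fin n → Bool, IsGeodesic P ∧ m = jumps f P}

/-- `f` respects the balls `B_t(0^n)` and `B_t(1^n)`: it is `0` on all points with at
most `t` ones and `1` on all points with at most `t` zeros. -/
def Respects {n : ℕ} (t : ℕ) (f : (Fin n → Bool) → Bool) : Prop :=
  (∀ x, onesCount x ≤ t → f x = false) ∧ (∀ x, zerosCount x ≤ t → f x = true)

/-- `t_f = t`: `t` is the largest radius whose balls `f` respects. -/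
def tfEq {n : ℕ} (f : (Fin n → Bool) → Bool) (t : ℕ) : Prop :=
  Respects t f ∧ ¬ Respects (t+1) f

/-- `winst t f`: the maximum number of jumps of `f` over all well-ending
`(t+1)`-geodesics (those starting with exactly `t+1` ones, whose first point has
colour `1` or whose last point has colour `0`). -/
noncomputable def winst {n : ℕ} (t : ℕ) (f : (Fin n → Bool) → Bool) : ℕ :=
  sSup {m | ∃ P : Fin (n+1) → Fin n → Bool, IsGeodesic P ∧ onesCount (P 0) = t + 1 ∧
    (f (P 0) = true ∨ f (P (Fin.last n)) = false) ∧ m = jumps f P}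

/-! ### Auxiliary machinery -/

def cnt (u : ℕ → Bool) (j : ℕ) : ℕ := ((Finset.range j).filter fun m => u m = true).card

lemma cnt_succ (u : ℕ → Bool) (j : ℕ) :
    cnt u (j+1) = cnt u j + if u j then 1 else 0 := by
  unfold cnt
  rw [Finset.range_add_one, Finset.filter_insert]
  split
  · rw [Finset.card_insert_of_notMem (by simp)]
  · simp

lemma cnt_zero (u : ℕ → Bool) : cnt u 0 = 0 := by simp [cnt]

lemma cnt_block (u : ℕ → Bool) (a k : ℕ) (v : Bool)
    (h : ∀ m, a ≤ m → m < a + k → u m = v) :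
    cnt u (a+k) = cnt u a + if v then k else 0 := by
  induction k with
  | zero => simp
  | succ k ih =>
      rw [show a + (k+1) = (a+k)+1 by omega, cnt_succ,
        ih (fun m h1 h2 => h m h1 (by omega)), h (a+k) (by omega) (by omega)]
      cases v <;> simp <;> omega

lemma cnt_rev (u : ℕ → Bool) (n : ℕ) : ∀ j, j ≤ n →
    cnt (fun m => u (n-1-m)) j + cnt u (n-j) = cnt u n := by
  intro j
  induction j with
  | zero => intro _; simp [cnt_zero]
  | succ j ih =>
      intro hj
      rw [cnt_succ]
      have h1 : n - j = (n - (j+1)) + 1 := by omega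
      have h2 := ih (by omega)
      rw [h1, cnt_succ] at h2
      have h3 : n - 1 - j = n - (j+1) := by omega
      rw [h3]
      omega

def u1 (d p q t : ℕ) : ℕ → Bool := fun m =>
  if m = 0 then true
  else if m ≤ (p+q)*d then decide ((m-1)/d % 2 = 1)
  else decide (m ≤ (p+q)*d + (t - d*q))

section
variable {d p q t : ℕ}

lemma cnt1_one : cnt (u1 d p q t) 1 = 1 := by
  rw [show (1:ℕ) = 0 + 1 by rfl, cnt_succ]
  simp [cnt, u1]

lemma u1_block (hd : 1 ≤ d) (s : ℕ) (hs : s < p + q) :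
    ∀ m, 1 + s*d ≤ m → m < 1 + s*d + d → u1 d p q t m = decide (s % 2 = 1) := by
  intro m h1 h2
  have hm0 : m ≠ 0 := by omega
  have hle : m ≤ (p+q)*d := by nlinarith
  have hsd : (s+1)*d = s*d + d := by ring
  have hdiv : (m-1)/d = s := Nat.div_eq_of_lt_le (by omega) (by omega)
  simp only [u1, if_neg hm0, if_pos hle, hdiv]

lemma cnt1_even (hd : 1 ≤ d) : ∀ k, 2*k ≤ p+q → cnt (u1 d p q t) (1+2*k*d) = 1 + d*k ∧
    (2*k+1 ≤ p+q → cnt (u1 d p q t) (1+(2*k+1)*d) = 1 + d*k) := by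
  intro k
  induction k with
  | zero =>
      intro _
      constructor
      · simpa using cnt1_one
      · intro h
        have := cnt_block (u1 d p q t) 1 d (decide (0 % 2 = 1))
          (fun m h1 h2 => u1_block hd 0 (by omega) m (by omega) (by omega))
        simp only [show 0 % 2 = 0 by rfl] at this ⊢
        rw [show 1+(2*0+1)*d = 1 + d by ring, this, cnt1_one]
        simp
  | succ k ih =>
      intro h2k
      have hodd : 2*k+1 ≤ p+q := by omega
      have ihodd := (ih (by omega)).2 hodd
      have heven : cnt (u1 d p q t) (1+2*(k+1)*d) = 1 + d*(k+1) := by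
        have := cnt_block (u1 d p q t) (1+(2*k+1)*d) d (decide ((2*k+1) % 2 = 1))
          (fun m h1 h2 => u1_block hd (2*k+1) (by omega) m (by omega) (by omega))
        rw [show 1+2*(k+1)*d = 1+(2*k+1)*d + d by ring, this, ihodd]
        have : (2*k+1) % 2 = 1 := by omega
        rw [this]
        simp
        ring
      refine ⟨heven, fun hodd2 => ?_⟩
      have := cnt_block (u1 d p q t) (1+2*(k+1)*d) d (decide ((2*(k+1)) % 2 = 1))
        (fun m h1 h2 => u1_block hd (2*(k+1)) (by omega) m (by omega) (by omega))
      rw [show 1+(2*(k+1)+1)*d = 1+2*(k+1)*d + d by ring, this, heven]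
      have : (2*(k+1)) % 2 = 0 := by omega
      rw [this]
      simp

lemma cnt1_mid (hd : 1 ≤ d) (hq : q = t / d) (hp : p = (t+d-1)/d) :
    cnt (u1 d p q t) (1+(p+q)*d) = 1 + d*q := by
  have hqp : q ≤ p := by
    rw [hq, hp]; exact Nat.div_le_div_right (by omega)
  have hpq1 : p ≤ q + 1 := by
    rw [hq, hp]
    calc (t+d-1)/d ≤ (t+d)/d := Nat.div_le_div_right (by omega)
    _ = t/d + 1 := by rw [Nat.add_div_right _ (by omega)]
  rcases (by omega : p = q ∨ p = q + 1) with h | h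
  · have := (cnt1_even (d:=d) (p:=p) (q:=q) (t := t) hd q (by omega)).1
    rw [show p + q = 2*q by omega]
    exact this
  · have := (cnt1_even (d:=d) (p:=p) (q:=q) (t := t) hd q (by omega)).2 (by omega)
    rw [show p + q = 2*q+1 by omega]
    exact this

lemma cnt1_top (hd : 1 ≤ d) (hq : q = t / d) (hp : p = (t+d-1)/d) :
    cnt (u1 d p q t) (2*t+d) = t + 1 := by
  have hdq : d * q ≤ t := by rw [hq, Nat.mul_comm]; exact Nat.div_mul_le_self t d
  have hdp : d * p ≤ t + d - 1 := by rw [hp, Nat.mul_comm]; exact Nat.div_mul_le_self _ d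
  have hmid := cnt1_mid hd hq hp
  have hA := cnt_block (u1 d p q t) (1+(p+q)*d) (t - d*q) true
    (fun m h1 h2 => by
      simp only [u1, if_neg (by omega : ¬ m = 0), if_neg (by push_neg; omega : ¬ m ≤ (p+q)*d)]
      simp; omega)
  have hB := cnt_block (u1 d p q t) (1+(p+q)*d + (t - d*q)) ((t+d-1) - d*p) false
    (fun m h1 h2 => by
      have hm1 : ¬ m = 0 := by omega
      have hm2 : ¬ m ≤ (p+q)*d := by
        push_neg
        have : (p+q)*d = d*p + d*q := by ring
        omega
      simp only [u1, if_neg hm1, if_neg hm2]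
      simp
      have : (p+q)*d = d*p + d*q := by ring
      omega)
  have hn : 2*t+d = 1+(p+q)*d + (t - d*q) + ((t+d-1) - d*p) := by
    have : (p+q)*d = d*p + d*q := by ring
    omega
  rw [hn, hB, hA, hmid]
  simp
  omega
end

def geo {n : ℕ} (x : Fin n → Bool) (σ : Equiv.Perm (Fin n)) : Fin (n+1) → Fin n → Bool :=
  fun j ℓ => if (σ ℓ : ℕ) < (j : ℕ) then !(x ℓ) else x ℓ

lemma geo_isGeodesic {n : ℕ} (x : Fin n → Bool) (σ : Equiv.Perm (Fin n)) :
    IsGeodesic (geo x σ) := by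
  refine ⟨σ, fun j ℓ => ?_⟩
  simp only [geo, Fin.val_succ, Fin.coe_castSucc]
  rcases eq_or_ne (σ ℓ) j with h | h
  · rw [if_pos h, if_pos (by omega : (σ ℓ : ℕ) < j + 1), if_neg (by omega : ¬ (σ ℓ : ℕ) < j)]
  · have hne : (σ ℓ : ℕ) ≠ (j : ℕ) := fun hc => h (Fin.ext hc)
    rw [if_neg h]
    rcases Nat.lt_or_ge (σ ℓ : ℕ) (j : ℕ) with h2 | h2
    · rw [if_pos (by omega), if_pos h2]
    · rw [if_neg (by omega), if_neg (by omega)]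

lemma geo_zero {n : ℕ} (x : Fin n → Bool) (σ : Equiv.Perm (Fin n)) : geo x σ 0 = x := by
  funext ℓ; simp [geo]

lemma geo_last {n : ℕ} (x : Fin n → Bool) (σ : Equiv.Perm (Fin n)) :
    geo x σ (Fin.last n) = fun ℓ => !(x ℓ) := by
  funext ℓ; simp [geo, (σ ℓ).isLt]

lemma card_filter_fin_eq (n : ℕ) (Q : ℕ → Prop) [DecidablePred Q] :
    (univ.filter fun m : Fin n => Q (m : ℕ)).card = ((range n).filter Q).card := by
  rw [← Finset.card_map ⟨Fin.val, Fin.val_injective⟩]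
  congr 1
  ext b
  simp only [Finset.mem_map, Finset.mem_filter, Finset.mem_univ, true_and,
    Finset.mem_range, Function.Embedding.coeFn_mk]
  constructor
  · rintro ⟨a, ha, rfl⟩; exact ⟨a.isLt, ha⟩
  · rintro ⟨hb, hQ⟩; exact ⟨⟨b, hb⟩, hQ, rfl⟩

lemma exists_perm {n : ℕ} (x : Fin n → Bool) (u : ℕ → Bool)
    (hcard : onesCount x = cnt u n) :
    ∃ σ : Equiv.Perm (Fin n), ∀ ℓ, x ℓ = u (σ ℓ : ℕ) := by
  have hT : Fintype.card {i : Fin n // x i = true} = Fintype.card {m : Fin n // u (m:ℕ) = true} := by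
    rw [Fintype.card_subtype, Fintype.card_subtype]
    rw [show (univ.filter fun m : Fin n => u (m:ℕ) = true).card = cnt u n from
      card_filter_fin_eq n (fun m => u m = true)]
    exact hcard
  have hF : Fintype.card {i : Fin n // ¬ x i = true} = Fintype.card {m : Fin n // ¬ u (m:ℕ) = true} := by
    rw [Fintype.card_subtype_compl, Fintype.card_subtype_compl, hT]
  let eT := Fintype.equivOfCardEq hT
  let eF := Fintype.equivOfCardEq hF
  let σ : Equiv.Perm (Fin n) :=
    ((Equiv.sumCompl (fun i : Fin n => x i = true)).symm.trans
      ((Equiv.sumCongr eT eF).trans (Equiv.sumCompl (fun m : Fin n => u (m:ℕ) = true))))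
  refine ⟨σ, fun ℓ => ?_⟩
  rcases hx : x ℓ with _ | _
  · have h1 : (Equiv.sumCompl (fun i : Fin n => x i = true)).symm ℓ = Sum.inr ⟨ℓ, by simp [hx]⟩ :=
      Equiv.sumCompl_symm_apply_of_neg (p := fun i : Fin n => x i = true) (by simp [hx])
    have : σ ℓ = (eF ⟨ℓ, by simp [hx]⟩ : {m : Fin n // ¬ u (m:ℕ) = true}).val := by
      simp only [σ, Equiv.trans_apply, h1, Equiv.sumCongr_apply, Sum.map_inr,
        Equiv.sumCompl_apply_inr]
    rw [this]
    have := (eF ⟨ℓ, by simp [hx]⟩).property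
    simp at this; simp [this]
  · have h1 : (Equiv.sumCompl (fun i : Fin n => x i = true)).symm ℓ = Sum.inl ⟨ℓ, hx⟩ :=
      Equiv.sumCompl_symm_apply_of_pos (p := fun i : Fin n => x i = true) hx
    have : σ ℓ = (eT ⟨ℓ, hx⟩ : {m : Fin n // u (m:ℕ) = true}).val := by
      simp only [σ, Equiv.trans_apply, h1, Equiv.sumCongr_apply, Sum.map_inl,
        Equiv.sumCompl_apply_inl]
    rw [this]
    exact ((eT ⟨ℓ, hx⟩).property).symm

lemma ones_add_zeros {n : ℕ} (x : Fin n → Bool) : onesCount x + zerosCount x = n := by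
  unfold onesCount zerosCount
  have h2 : (univ.filter fun i : Fin n => x i = false) = (univ.filter fun i => ¬ (x i = true)) :=
    Finset.filter_congr (fun i _ => by simp)
  rw [h2, Finset.card_filter_add_card_filter_not]
  simp

lemma ones_neg {n : ℕ} (z : Fin n → Bool) : onesCount (fun i => !(z i)) = zerosCount z := by
  unfold onesCount zerosCount
  congr 1
  exact Finset.filter_congr (fun i _ => by simp)

def ptAt {n : ℕ} (P : Fin (n+1) → Fin n → Bool) (j : ℕ) : Fin n → Bool :=
  P ⟨min j n, by omega⟩

lemma ptAt_zero {n : ℕ} (P : Fin (n+1) → Fin n → Bool) : ptAt P 0 = P 0 := by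
  unfold ptAt
  exact congrArg P (Fin.ext (by simp))

lemma ptAt_last {n : ℕ} (P : Fin (n+1) → Fin n → Bool) : ptAt P n = P (Fin.last n) := by
  unfold ptAt
  exact congrArg P (Fin.ext (by simp))

lemma ones_geo {n : ℕ} (x : Fin n → Bool) (σ : Equiv.Perm (Fin n)) (u : ℕ → Bool)
    (hxu : ∀ ℓ, x ℓ = u (σ ℓ : ℕ)) (j : ℕ) (hj : j ≤ n) :
    onesCount (geo x σ ⟨j, by omega⟩) + 2 * cnt u j = j + cnt u n := by
  have step1 : onesCount (geo x σ ⟨j, by omega⟩) =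
      (univ.filter fun ℓ : Fin n =>
        (if ((σ ℓ : ℕ)) < j then u (σ ℓ : ℕ) = false else u (σ ℓ : ℕ) = true)).card := by
    unfold onesCount geo
    apply Finset.card_bij (fun a _ => a)
    · intro a ha
      simp only [Finset.mem_filter, Finset.mem_univ, true_and] at ha ⊢
      rw [hxu a] at ha
      split at ha <;> split <;> simp_all
    · intro a b _ _ h; exact h
    · intro b hb
      refine ⟨b, ?_, rfl⟩
      simp only [Finset.mem_filter, Finset.mem_univ, true_and] at hb ⊢
      rw [hxu b]
      split at hb <;> split <;> simp_all
  have step2 : (univ.filter fun ℓ : Fin n =>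
        (if ((σ ℓ : ℕ)) < j then u (σ ℓ : ℕ) = false else u (σ ℓ : ℕ) = true)).card =
      (univ.filter fun m : Fin n =>
        (if ((m : ℕ)) < j then u (m : ℕ) = false else u (m : ℕ) = true)).card := by
    apply Finset.card_bij (fun a _ => σ a)
    · intro a ha; simpa using (by simpa using ha)
    · intro a b _ _ h; exact σ.injective h
    · intro b hb; exact ⟨σ.symm b, by simpa using (by simpa using hb), by simp⟩
  have step3 : (univ.filter fun m : Fin n =>
        (if ((m : ℕ)) < j then u (m : ℕ) = false else u (m : ℕ) = true)).card =
      ((range n).filter fun m => (if m < j then u m = false else u m = true)).card := by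
    have := card_filter_fin_eq n (fun m => if m < j then u m = false else u m = true)
    convert this using 2
  have hsplit : range n = range j ∪ Finset.Ico j n := by
    rw [Finset.range_eq_Ico, Finset.range_eq_Ico]
    exact (Finset.Ico_union_Ico_eq_Ico (by omega) hj).symm
  have hdisj : Disjoint ((range j).filter fun m => (if m < j then u m = false else u m = true))
      ((Finset.Ico j n).filter fun m => (if m < j then u m = false else u m = true)) := by
    apply Finset.disjoint_filter_filter
    rw [Finset.range_eq_Ico]
    exact Finset.Ico_disjoint_Ico_consecutive 0 j n
  have step4 : ((range n).filter fun m => (if m < j then u m = false else u m = true)).card =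
      ((range j).filter fun m => u m = false).card +
      ((Finset.Ico j n).filter fun m => u m = true).card := by
    rw [hsplit, Finset.filter_union, Finset.card_union_of_disjoint hdisj]
    congr 1
    · congr 1
      apply Finset.filter_congr; intro m hm; simp only [Finset.mem_range] at hm; simp [hm]
    · congr 1
      apply Finset.filter_congr; intro m hm; simp only [Finset.mem_Ico] at hm
      rw [if_neg (by omega)]
  have step5 : ((range j).filter fun m => u m = false).card + cnt u j = j := by
    unfold cnt
    have h2 : ((range j).filter fun m => u m = false) = ((range j).filter fun m => ¬ (u m = true)) :=
      Finset.filter_congr (fun m _ => by simp)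
    rw [h2, add_comm, Finset.card_filter_add_card_filter_not]
    simp
  have step6 : cnt u j + ((Finset.Ico j n).filter fun m => u m = true).card = cnt u n := by
    unfold cnt
    rw [← Finset.card_union_of_disjoint (by
      apply Finset.disjoint_filter_filter
      rw [Finset.range_eq_Ico]
      exact Finset.Ico_disjoint_Ico_consecutive 0 j n), ← Finset.filter_union, ← hsplit]
  omega

lemma ones_ptAt {n : ℕ} (x : Fin n → Bool) (σ : Equiv.Perm (Fin n)) (u : ℕ → Bool)
    (hxu : ∀ ℓ, x ℓ = u (σ ℓ : ℕ)) (j : ℕ) (hj : j ≤ n) :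
    onesCount (ptAt (geo x σ) j) + 2 * cnt u j = j + cnt u n := by
  have e : ptAt (geo x σ) j = geo x σ ⟨j, by omega⟩ := by
    unfold ptAt
    exact congrArg _ (Fin.ext (min_eq_left hj))
  rw [e]
  exact ones_geo x σ u hxu j hj

lemma jumps_le {n : ℕ} (f : (Fin n → Bool) → Bool) (P : Fin (n+1) → Fin n → Bool) :
    jumps f P ≤ n := by
  unfold jumps
  exact (Finset.card_filter_le _ _).trans (by simp)

lemma exists_jump (G : ℕ → Bool) : ∀ b a, a ≤ b → G a ≠ G b →
    ∃ j, a ≤ j ∧ j < b ∧ G j ≠ G (j+1) := by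
  intro b
  induction b with
  | zero => intro a ha hG; exact absurd (by rw [show a = 0 by omega]) hG
  | succ b ih =>
      intro a ha hG
      rcases eq_or_ne (G b) (G (b+1)) with h | h
      · have ha' : a ≤ b := by
          rcases Nat.lt_or_ge a (b+1) with h2 | h2
          · omega
          · exfalso; exact hG (by rw [show a = b + 1 by omega])
        obtain ⟨j, hj1, hj2, hj3⟩ := ih a ha' (fun hc => hG (hc.trans h))
        exact ⟨j, hj1, by omega, hj3⟩
      · rcases Nat.lt_or_ge a (b+1) with h2 | h2
        · exact ⟨b, by omega, by omega, h⟩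
        · exact absurd (by rw [show a = b + 1 by omega]) hG

lemma jumps_lower {n : ℕ} (hn : 0 < n) (f : (Fin n → Bool) → Bool)
    (P : Fin (n+1) → Fin n → Bool) (k : ℕ) (c : ℕ → ℕ)
    (hc : ∀ i < k, c i < c (i+1)) (hck : c k ≤ n)
    (halt : ∀ i < k, f (ptAt P (c i)) ≠ f (ptAt P (c (i+1)))) :
    k ≤ jumps f P := by
  set G : ℕ → Bool := fun j => f (ptAt P j) with hG
  have cmono : ∀ j, j ≤ k → ∀ i, i ≤ j → c i ≤ c j := by
    intro j
    induction j with
    | zero => intro _ i hi; rw [show i = 0 by omega]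
    | succ j ih =>
        intro hjk i hi
        rcases Nat.lt_or_ge i (j+1) with h | h
        · exact le_trans (ih (by omega) i (by omega)) (le_of_lt (hc j (by omega)))
        · rw [show i = j+1 by omega]
  have hex : ∀ i, i < k → ∃ j, c i ≤ j ∧ j < c (i+1) ∧ G j ≠ G (j+1) := fun i hi =>
    exists_jump G (c (i+1)) (c i) (le_of_lt (hc i hi)) (halt i hi)
  classical
  set J : ℕ → ℕ := fun i => if h : i < k then (hex i h).choose else 0 with hJ
  have hJspec : ∀ i < k, c i ≤ J i ∧ J i < c (i+1) ∧ G (J i) ≠ G (J i + 1) := by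
    intro i hi
    simp only [hJ, dif_pos hi]
    exact (hex i hi).choose_spec
  have hJlt : ∀ i < k, J i < n := by
    intro i hi
    have := (hJspec i hi).2.1
    have := cmono k (le_refl k) (i+1) (by omega)
    omega
  set K : ℕ → Fin n := fun i => ⟨J i % n, Nat.mod_lt _ hn⟩ with hK
  have hKval : ∀ i < k, (K i : ℕ) = J i := fun i hi => Nat.mod_eq_of_lt (hJlt i hi)
  have hmaps : ∀ i ∈ range k, K i ∈ univ.filter fun j : Fin n => f (P j.succ) ≠ f (P j.castSucc) := by
    intro i hi
    simp only [Finset.mem_range] at hi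
    simp only [Finset.mem_filter, Finset.mem_univ, true_and]
    have hspec := hJspec i hi
    have hlt := hJlt i hi
    have h1 : P (K i).succ = ptAt P (J i + 1) := by
      unfold ptAt
      apply congrArg P
      apply Fin.ext
      simp only [Fin.val_succ]
      rw [hKval i hi, Nat.min_eq_left (by omega)]
    have h2 : P (K i).castSucc = ptAt P (J i) := by
      unfold ptAt
      apply congrArg P
      apply Fin.ext
      simp only [Fin.coe_castSucc]
      rw [hKval i hi, Nat.min_eq_left (by omega)]
    rw [h1, h2]
    exact fun hcon => hspec.2.2 hcon.symm
  have key : ∀ a b, a < b → b < k → J a < J b := by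
    intro a b hab hbk
    have h1 : J a < c (a+1) := (hJspec a (by omega)).2.1
    have h2 : c b ≤ J b := (hJspec b hbk).1
    have h3 : c (a+1) ≤ c b := cmono b (by omega) (a+1) (by omega)
    omega
  have hinj : Set.InjOn K (range k) := by
    intro a ha b hb hab
    simp only [Finset.coe_range, Set.mem_Iio] at ha hb
    have hv := congrArg Fin.val hab
    rw [hKval a ha, hKval b hb] at hv
    rcases Nat.lt_trichotomy a b with h | h | h
    · have := key a b h hb; omega
    · exact h
    · have := key b a h ha; omega
  calc k = (range k).card := by simp
  _ ≤ _ := Finset.card_le_card_of_injOn K hmaps hinj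

/-- The zig-zag bound (a): for `n ≥ 2t+1`, every colouring `f` of `H_n` with `t_f = t`
satisfies `winst f ≥ ⌊t/(n-2t)⌋ + ⌈t/(n-2t)⌉ + 1`. -/
theorem zigzag_winst (n t : ℕ) (hn : 0 < n) (hvalid : 2 * t + 1 ≤ n)
    (f : (Fin n → Bool) → Bool) (hf : tfEq f t) :
    t / (n - 2 * t) + (t + (n - 2 * t) - 1) / (n - 2 * t) + 1 ≤ winst t f := by
  obtain ⟨hresp, hnot⟩ := hf
  obtain ⟨d, hd1, hnd⟩ : ∃ d, 1 ≤ d ∧ n = 2*t + d := ⟨n - 2*t, by omega, by omega⟩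
  have hsub : n - 2*t = d := by omega
  rw [hsub]
  set q := t / d with hq
  set p := (t + d - 1) / d with hp
  have hdq : d * q ≤ t := by rw [hq, Nat.mul_comm]; exact Nat.div_mul_le_self t d
  have hdp : d * p ≤ t + d - 1 := by rw [hp, Nat.mul_comm]; exact Nat.div_mul_le_self _ d
  set u := u1 d p q t with hu
  have htop : cnt u n = t + 1 := by rw [hnd]; exact cnt1_top hd1 hq hp
  have hce : ∀ k, 2*k ≤ p + q → cnt u (1+2*k*d) = 1 + d*k := fun k h =>
    (cnt1_even (d:=d) (p:=p) (q:=q) (t:=t) hd1 k h).1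
  have hco : ∀ k, 2*k+1 ≤ p + q → cnt u (1+(2*k+1)*d) = 1 + d*k := fun k h =>
    (cnt1_even (d:=d) (p:=p) (q:=q) (t:=t) hd1 k (by omega)).2 h
  have hjn : ∀ s, s ≤ p + q → 1 + s*d ≤ n := by
    intro s hs
    have h1 : s*d ≤ (p+q)*d := Nat.mul_le_mul_right d hs
    have h2 : (p+q)*d = d*p + d*q := by ring
    omega
  have hBdd : BddAbove {m | ∃ P : Fin (n+1) → Fin n → Bool, IsGeodesic P ∧
      onesCount (P 0) = t + 1 ∧ (f (P 0) = true ∨ f (P (Fin.last n)) = false) ∧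
      m = jumps f P} := by
    refine ⟨n, fun m hm => ?_⟩
    obtain ⟨P, _, _, _, rfl⟩ := hm
    exact jumps_le f P
  rw [Respects, not_and_or] at hnot
  rcases hnot with hcase | hcase
  · -- Case 1: a point with t+1 ones coloured true
    push_neg at hcase
    obtain ⟨z, hz1, hz2⟩ := hcase
    have hz2' : f z = true := by
      rcases Bool.eq_false_or_eq_true (f z) with h | h
      · exact h
      · exact absurd h hz2
    have hz1' : onesCount z = t + 1 := by
      rcases Nat.lt_or_ge (onesCount z) (t+1) with h | h
      · have := hresp.1 z (by omega)
        rw [this] at hz2'; exact absurd hz2' (by simp)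
      · omega
    obtain ⟨σ, hσ⟩ := exists_perm z u (by rw [htop, hz1'])
    set P := geo z σ with hP
    have hcolor : ∀ s, s ≤ p+q → f (ptAt P (1 + s*d)) = decide (s % 2 = 1) := by
      intro s hs
      have hjle := hjn s hs
      have hones := ones_ptAt z σ u hσ (1+s*d) hjle
      rw [← hP, htop] at hones
      set k := s / 2 with hk
      rcases (by omega : s = 2*k ∨ s = 2*k+1) with hsk | hsk
      · have hcnt := hce k (by omega)
        rw [show (1:ℕ)+s*d = 1+2*k*d by rw [hsk]] at hones
        have e1 : 2*k*d = 2*(d*k) := by ring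
        have honesval : onesCount (ptAt P (1+s*d)) = t := by
          rw [show (1:ℕ)+s*d = 1+2*k*d by rw [hsk]]
          omega
        rw [hresp.1 _ (le_of_eq honesval)]
        symm
        exact decide_eq_false (by omega)
      · have hcnt := hco k (by omega)
        rw [show (1:ℕ)+s*d = 1+(2*k+1)*d by rw [hsk]] at hones
        have e1 : (2*k+1)*d = 2*(d*k) + d := by ring
        have honesval : onesCount (ptAt P (1+s*d)) = t + d := by
          rw [show (1:ℕ)+s*d = 1+(2*k+1)*d by rw [hsk]]
          omega
        have hzeros := ones_add_zeros (ptAt P (1+s*d))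
        rw [hresp.2 _ (by omega)]
        symm
        exact decide_eq_true (by omega)
    set c : ℕ → ℕ := fun i => if i = 0 then 0 else 1 + (i-1)*d with hcdef
    have hc : ∀ i < p+q+1, c i < c (i+1) := by
      intro i hi
      simp only [hcdef]
      rcases Nat.eq_zero_or_pos i with rfl | hpos
      · simp
      · rw [if_neg (by omega), if_neg (by omega)]
        have e : (i+1-1)*d = (i-1)*d + d := by
          rw [show i+1-1 = (i-1)+1 by omega, Nat.succ_mul]
        omega
    have hck : c (p+q+1) ≤ n := by
      simp only [hcdef]
      rw [if_neg (show ¬ (p+q+1 = 0) by simp)]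
      have := hjn (p+q) le_rfl
      simpa using this
    have hcol : ∀ i, i ≤ p+q+1 → f (ptAt P (c i)) = decide (i % 2 = 0) := by
      intro i hi
      rcases Nat.eq_zero_or_pos i with rfl | hpos
      · simp only [hcdef, if_pos rfl]
        rw [ptAt_zero, hP, geo_zero, hz2']
        simp
      · simp only [hcdef]
        rw [if_neg (by omega), hcolor (i-1) (by omega), decide_eq_decide]
        omega
    have halt : ∀ i < p+q+1, f (ptAt P (c i)) ≠ f (ptAt P (c (i+1))) := by
      intro i hi
      rw [hcol i (by omega), hcol (i+1) (by omega)]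
      simp only [ne_eq, decide_eq_decide]
      omega
    have hjump := jumps_lower hn f P (p+q+1) c hc hck halt
    have hmem : jumps f P ∈ {m | ∃ P : Fin (n+1) → Fin n → Bool, IsGeodesic P ∧
        onesCount (P 0) = t + 1 ∧ (f (P 0) = true ∨ f (P (Fin.last n)) = false) ∧
        m = jumps f P} :=
      ⟨P, geo_isGeodesic z σ, by rw [hP, geo_zero]; exact hz1',
        Or.inl (by rw [hP, geo_zero]; exact hz2'), rfl⟩
    have hwle : jumps f P ≤ winst t f := le_csSup hBdd hmem
    omega
  · -- Case 2: a point with t+1 zeros coloured false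
    push_neg at hcase
    obtain ⟨z, hz1, hz2⟩ := hcase
    have hz2' : f z = false := by
      rcases Bool.eq_false_or_eq_true (f z) with h | h
      · exact absurd h hz2
      · exact h
    have hz1' : zerosCount z = t + 1 := by
      rcases Nat.lt_or_ge (zerosCount z) (t+1) with h | h
      · have := hresp.2 z (by omega)
        rw [this] at hz2'; exact absurd hz2' (by simp)
      · omega
    set x : Fin n → Bool := fun i => !(z i) with hxdef
    have hxones : onesCount x = t + 1 := by rw [hxdef, ones_neg]; exact hz1'
    set u2 : ℕ → Bool := fun m => u (n-1-m) with hu2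
    have hu2top : cnt u2 n = t + 1 := by
      have := cnt_rev u n n le_rfl
      rw [Nat.sub_self, cnt_zero] at this
      rw [hu2]
      omega
    obtain ⟨σ, hσ⟩ := exists_perm x u2 (by rw [hu2top, hxones])
    set P := geo x σ with hP
    have hcolor : ∀ s, s ≤ p+q → f (ptAt P (n - 1 - s*d)) = decide (s % 2 = 0) := by
      intro s hs
      have hjle := hjn s hs
      set j := n - 1 - s*d with hj
      have hjlen : j ≤ n := by omega
      have hrev := cnt_rev u n j (by omega)
      have hnj : n - j = 1 + s*d := by omega
      rw [← hu2, hnj, htop] at hrev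
      have hones := ones_ptAt x σ u2 hσ j hjlen
      rw [← hP, hu2top] at hones
      set k := s / 2 with hk
      rcases (by omega : s = 2*k ∨ s = 2*k+1) with hsk | hsk
      · have hcnt := hce k (by omega)
        rw [show (1:ℕ)+s*d = 1+2*k*d by rw [hsk]] at hrev
        have e1 : 2*k*d = 2*(d*k) := by ring
        have e2 : s*d = 2*(d*k) := by rw [hsk]; ring
        have hcnt2 : cnt u2 j = t - d*k := by omega
        have honesval : onesCount (ptAt P j) = t + d := by omega
        have hzeros := ones_add_zeros (ptAt P j)
        rw [hresp.2 _ (by omega)]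
        symm
        exact decide_eq_true (by omega)
      · have hcnt := hco k (by omega)
        rw [show (1:ℕ)+s*d = 1+(2*k+1)*d by rw [hsk]] at hrev
        have e1 : (2*k+1)*d = 2*(d*k) + d := by ring
        have e2 : s*d = 2*(d*k) + d := by rw [hsk]; ring
        have hcnt2 : cnt u2 j = t - d*k := by omega
        have honesval : onesCount (ptAt P j) = t := by omega
        rw [hresp.1 _ (le_of_eq honesval)]
        symm
        exact decide_eq_false (by omega)
    set c : ℕ → ℕ := fun i => if i = p+q+1 then n else n - 1 - (p+q-i)*d with hcdef
    have hc : ∀ i < p+q+1, c i < c (i+1) := by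
      intro i hi
      simp only [hcdef]
      rcases eq_or_ne i (p+q) with rfl | hne
      · rw [if_neg (by omega), if_pos rfl]
        simp only [Nat.sub_self, Nat.zero_mul, Nat.sub_zero]
        omega
      · rw [if_neg (by omega), if_neg (by omega)]
        have e : (p+q-i)*d = (p+q-(i+1))*d + d := by
          rw [show p+q-i = (p+q-(i+1))+1 by omega, Nat.succ_mul]
        have hb := hjn (p+q-i) (by omega)
        omega
    have hck : c (p+q+1) ≤ n := by
      simp only [hcdef, if_pos rfl]
      exact le_rfl
    have hplast : f (ptAt P n) = false := by
      rw [ptAt_last, hP, geo_last]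
      have : (fun ℓ => !(x ℓ)) = z := by
        funext ℓ; rw [hxdef]; simp
      rw [this, hz2']
    have hcol : ∀ i, i ≤ p+q+1 →
        f (ptAt P (c i)) = if i = p+q+1 then false else decide ((p+q-i) % 2 = 0) := by
      intro i hi
      rcases eq_or_ne i (p+q+1) with rfl | hne
      · simp only [hcdef, if_pos rfl]
        exact hplast
      · simp only [hcdef]
        rw [if_neg hne, if_neg hne]
        exact hcolor (p+q-i) (by omega)
    have halt : ∀ i < p+q+1, f (ptAt P (c i)) ≠ f (ptAt P (c (i+1))) := by
      intro i hi
      rw [hcol i (by omega), hcol (i+1) (by omega)]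
      rcases eq_or_ne i (p+q) with rfl | hne
      · rw [if_neg (by omega), if_pos rfl]
        simp only [Nat.sub_self]
        simp
      · rw [if_neg (by omega), if_neg (by omega)]
        simp only [ne_eq, decide_eq_decide]
        omega
    have hjump := jumps_lower hn f P (p+q+1) c hc hck halt
    have hmem : jumps f P ∈ {m | ∃ P : Fin (n+1) → Fin n → Bool, IsGeodesic P ∧
        onesCount (P 0) = t + 1 ∧ (f (P 0) = true ∨ f (P (Fin.last n)) = false) ∧
        m = jumps f P} :=
      ⟨P, geo_isGeodesic x σ, by rw [hP, geo_zero]; exact hxones,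
        Or.inr (by rw [← ptAt_last P]; exact hplast), rfl⟩
    have hwle : jumps f P ≤ winst t f := le_csSup hBdd hmem
    omega
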